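/- For every nonnegative integer k, every nonnegative real number r, and all positive real numbers ℓ and N, there exists a real number N* ≥ N such that the following holds. Let (G,φ) be a (0,ℓ]-bounded weighted graph, let S ⊆ V(G) with |S| ≤ k, let Z ⊆ N_{(G,φ)}^{≤r}[S], let m be a positive integer, let R ⊆ V(G), let c_Z : Z → {1,…,m}, and let c be an m-coloring of (G,φ)^ℓ − (R ∪ Z) with weak diameter in (G,φ)^ℓ at most N. Then the m-coloring c ∪ c_Z|_{Z−R} of (G,φ)^ℓ − R has weak diameter in (G,φ)^ℓ at most N*. -/

import Mathlib

open scoped ENNReal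

/-- The length of a walk in an edge-weighted graph: the sum of the weights of its edges. -/
def walkLen {V : Type} {G : SimpleGraph V} (w : Sym2 V → ℝ) {x y : V} (p : G.Walk x y) : ℝ :=
  (p.edges.map w).sum

/-- The distance between two vertices of an edge-weighted graph: the infimum of the lengths
of paths between them (`⊤` if there is no such path). -/
noncomputable def wDist {V : Type} (G : SimpleGraph V) (w : Sym2 V → ℝ) (x y : V) : ℝ≥0∞ :=
  ⨅ q : {q : G.Walk x y // q.IsPath}, ENNReal.ofReal (walkLen w q.1)

lemma wDist_comm {V : Type} (G : SimpleGraph V) (w : Sym2 V → ℝ) (x y : V) :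
    wDist G w x y = wDist G w y x := by
  have key : ∀ a b : V, wDist G w a b ≤ wDist G w b a := by
    intro a b
    refine le_iInf fun q => ?_
    refine iInf_le_of_le ⟨q.1.reverse, q.2.reverse⟩ ?_
    simp [walkLen, List.sum_reverse]
  exact le_antisymm (key x y) (key y x)

/-- The power graph: two distinct vertices are adjacent iff their weighted distance
is at most `r`. -/
noncomputable def powerGraph {V : Type} (G : SimpleGraph V) (w : Sym2 V → ℝ) (r : ℝ) :
    SimpleGraph V where
  Adj x y := x ≠ y ∧ wDist G w x y ≤ ENNReal.ofReal r
  symm := ⟨by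
    rintro x y ⟨hne, hle⟩
    exact ⟨hne.symm, by rwa [wDist_comm]⟩⟩
  loopless := ⟨fun x h => h.1 rfl⟩

/-- The unit-length (hop) distance in an unweighted graph. -/
noncomputable def hopDist {V : Type} (L : SimpleGraph V) (x y : V) : ℝ≥0∞ :=
  ⨅ q : L.Walk x y, (q.length : ℝ≥0∞)

/-- Same-colour adjacency within a vertex set `A`. -/
def colorGraph {V : Type} (K : SimpleGraph V) (A : Set V) {m : ℕ} (c : V → Fin m) :
    SimpleGraph V where
  Adj x y := K.Adj x y ∧ x ∈ A ∧ y ∈ A ∧ c x = c y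
  symm := ⟨by
    rintro x y ⟨h, hx, hy, hc⟩
    exact ⟨h.symm, hy, hx, hc.symm⟩⟩
  loopless := ⟨fun x h => K.loopless.irrefl x h.1⟩

/-- The colouring `c` of the subgraph of `K` induced on `A` has weak diameter, measured by the
hop distance of `L`, at most `N`: any two vertices of a monochromatic component of `K ↾ A` are
at hop distance at most `N` in `L`. -/
def HasWeakDiamLE {V : Type} (K : SimpleGraph V) (A : Set V) (L : SimpleGraph V) {m : ℕ}
    (c : V → Fin m) (N : ℝ) : Prop :=
  ∀ x ∈ A, ∀ y ∈ A, (colorGraph K A c).Reachable x y → hopDist L x y ≤ ENNReal.ofReal N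

/-- `nbhd G w r S`: vertices joined to `S` by a path of weighted length at most `r`. -/
def nbhd {V : Type} (G : SimpleGraph V) (w : Sym2 V → ℝ) (r : ℝ) (S : Set V) : Set V :=
  {v | ∃ s ∈ S, ∃ q : G.Walk v s, q.IsPath ∧ walkLen w q ≤ r}

/-- Deleting a set of vertices (keeping them as isolated vertices of the ambient type). -/
def delVerts {V : Type} (G : SimpleGraph V) (Z : Set V) : SimpleGraph V where
  Adj x y := G.Adj x y ∧ x ∉ Z ∧ y ∉ Z
  symm := ⟨by
    rintro x y ⟨h, hx, hy⟩
    exact ⟨h.symm, hy, hx⟩⟩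
  loopless := ⟨fun x h => G.loopless.irrefl x h.1⟩

/-- A weighted graph: a finite simple graph together with positive edge weights. -/
structure WGraph : Type 1 where
  V : Type
  fin : Finite V
  G : SimpleGraph V
  w : Sym2 V → ℝ
  pos : ∀ e ∈ G.edgeSet, 0 < w e

/-- The extended metric on the vertex set of a weighted graph. -/
noncomputable def WGraph.dist (W : WGraph) : W.V → W.V → ℝ≥0∞ := wDist W.G W.w

/-- All edge weights lie in `(0, ℓ]`. -/
def WGraph.IsBounded (W : WGraph) (ℓ : ℝ) : Prop := ∀ e ∈ W.G.edgeSet, W.w e ≤ ℓ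

/-- `f` is an `n`-dimensional control function for the extended metric `d`. -/
def IsControlOn {X : Type} (d : X → X → ℝ≥0∞) (n : ℕ) (f : ℝ → ℝ) : Prop :=
  ∀ r : ℝ, 0 < r → ∃ U : Fin (n + 1) → Set (Set X),
    (∀ x : X, ∃ i, ∃ s ∈ U i, x ∈ s) ∧
    (∀ i, ∀ s ∈ U i, ∀ t ∈ U i, s ≠ t → ∀ x ∈ s, ∀ y ∈ t, ENNReal.ofReal r < d x y) ∧
    (∀ i, ∀ s ∈ U i, ∀ x ∈ s, ∀ y ∈ s, d x y ≤ ENNReal.ofReal (f r))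

/-- The asymptotic dimension of a class of weighted graphs is at most `n`. -/
def asdimLE (F : Set WGraph) (n : ℕ) : Prop :=
  ∃ f : ℝ → ℝ, (∀ x, 0 < x → 0 < f x) ∧ ∀ W ∈ F, IsControlOn W.dist n f

/-- The Assouad–Nagata dimension of a class of weighted graphs is at most `n`:
some dilation is a common `n`-dimensional control function. -/
def ANdimLE (F : Set WGraph) (n : ℕ) : Prop :=
  ∃ (f : ℝ → ℝ) (c : ℝ), 0 < c ∧ (∀ x, 0 < x → 0 < f x) ∧ (∀ x, 0 < x → f x ≤ c * x) ∧
    ∀ W ∈ F, IsControlOn W.dist n f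

/-- `H` is a minor of `G`: there are pairwise disjoint nonempty connected branch sets in `G`,
one for each vertex of `H`, with branch sets of adjacent vertices joined by an edge. -/
def IsMinorOf {α β : Type} (H : SimpleGraph β) (G : SimpleGraph α) : Prop :=
  ∃ B : β → Set α,
    (∀ h, (B h).Nonempty) ∧
    (∀ h h', h ≠ h' → Disjoint (B h) (B h')) ∧
    (∀ h, (G.induce (B h)).Connected) ∧
    (∀ h h', H.Adj h h' → ∃ a ∈ B h, ∃ b ∈ B h', G.Adj a b)
-- ==== auxiliary material ====

/-- There is a walk from `x` to `y` in `L` of length at most `n`. -/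
def WB {V : Type} (L : SimpleGraph V) (x y : V) (n : ℕ) : Prop :=
  ∃ p : L.Walk x y, p.length ≤ n

namespace WB

variable {V : Type} {L : SimpleGraph V} {x y z : V} {a b n nn : ℕ}

lemma mono (h : WB L x y a) (hab : a ≤ b) : WB L x y b :=
  ⟨h.choose, h.choose_spec.trans hab⟩

lemma refl (L : SimpleGraph V) (x : V) : WB L x x 0 := ⟨SimpleGraph.Walk.nil, le_refl 0⟩

lemma trans (h1 : WB L x y a) (h2 : WB L y z b) : WB L x z (a + b) := by
  obtain ⟨p, hp⟩ := h1
  obtain ⟨q, hq⟩ := h2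
  exact ⟨p.append q, by rw [SimpleGraph.Walk.length_append]; omega⟩

lemma symm (h : WB L x y a) : WB L y x a := by
  obtain ⟨p, hp⟩ := h
  exact ⟨p.reverse, by rwa [SimpleGraph.Walk.length_reverse]⟩

lemma of_adj (h : L.Adj x y) : WB L x y 1 :=
  ⟨SimpleGraph.Walk.cons h SimpleGraph.Walk.nil, le_refl 1⟩

end WB

lemma hopDist_le_WB {V : Type} {L : SimpleGraph V} {x y : V} {n : ℕ} (h : WB L x y n) :
    hopDist L x y ≤ (n : ℝ≥0∞) := by
  obtain ⟨p, hp⟩ := h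
  exact le_trans (iInf_le _ p) (by exact_mod_cast hp)

lemma WB_of_hopDist {V : Type} {L : SimpleGraph V} {x y : V} {N : ℝ} (hN : 0 ≤ N)
    (h : hopDist L x y ≤ ENNReal.ofReal N) : WB L x y (Nat.floor (N + 1)) := by
  have h2 : hopDist L x y < ENNReal.ofReal (N + 1) :=
    lt_of_le_of_lt h (by rw [ENNReal.ofReal_lt_ofReal_iff (by linarith)]; linarith)
  rw [hopDist, iInf_lt_iff] at h2
  obtain ⟨q, hq⟩ := h2
  rw [← ENNReal.ofReal_natCast] at hq
  have hlt := (ENNReal.ofReal_lt_ofReal_iff (by linarith)).1 hq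
  exact ⟨q, Nat.le_floor (by linarith)⟩

section WalkLen

variable {V : Type} {G : SimpleGraph V} {w : Sym2 V → ℝ} {ℓ : ℝ}

lemma walkLen_nil {x : V} : walkLen w (SimpleGraph.Walk.nil : G.Walk x x) = 0 := by
  simp [walkLen]

lemma walkLen_cons {x y z : V} (h : G.Adj x y) (p : G.Walk y z) :
    walkLen w (SimpleGraph.Walk.cons h p) = w s(x, y) + walkLen w p := by
  simp [walkLen]

lemma walkLen_append {x y z : V} (p : G.Walk x y) (q : G.Walk y z) :
    walkLen w (p.append q) = walkLen w p + walkLen w q := by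
  simp [walkLen, SimpleGraph.Walk.edges_append]

lemma walkLen_concat {x y z : V} (p : G.Walk x y) (h : G.Adj y z) :
    walkLen w (p.concat h) = walkLen w p + w s(y, z) := by
  rw [SimpleGraph.Walk.concat_eq_append, walkLen_append, walkLen_cons, walkLen_nil]
  ring

lemma walkLen_nonneg (hpos : ∀ e ∈ G.edgeSet, 0 < w e) {x y : V} (p : G.Walk x y) :
    0 ≤ walkLen w p := by
  refine List.sum_nonneg fun a ha => ?_
  obtain ⟨e, he, rfl⟩ := List.mem_map.1 ha
  exact (hpos e (p.edges_subset_edgeSet he)).le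

lemma WB_of_path (hℓ : 0 < ℓ) {x y : V} (q : G.Walk x y) (hq : q.IsPath)
    (hlen : walkLen w q ≤ ℓ) : WB (powerGraph G w ℓ) x y 1 := by
  by_cases hxy : x = y
  · subst hxy; exact (WB.refl _ _).mono (by norm_num)
  · refine WB.of_adj ⟨hxy, ?_⟩
    calc wDist G w x y ≤ ENNReal.ofReal (walkLen w q) := iInf_le (fun q : {q : G.Walk x y // q.IsPath} => ENNReal.ofReal (walkLen w q.1)) ⟨q, hq⟩
    _ ≤ ENNReal.ofReal ℓ := ENNReal.ofReal_le_ofReal hlen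

lemma peelAux (hℓ : 0 < ℓ) (hb : ∀ e ∈ G.edgeSet, w e ≤ ℓ) :
    ∀ {v y : V} (q : G.Walk v y) {x : V} (q1 : G.Walk x v),
      (q1.append q).IsPath → walkLen w q1 ≤ ℓ →
      WB (powerGraph G w ℓ) x y 1 ∨
      ∃ (u : V) (p' : G.Walk u y), p'.IsPath ∧ p'.length < q.length ∧
        walkLen w p' + ℓ < walkLen w q1 + walkLen w q ∧ WB (powerGraph G w ℓ) x u 2 := by
  intro v y q
  induction q with
  | nil =>
    intro x q1 hp hq1
    rw [SimpleGraph.Walk.append_nil] at hp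
    exact Or.inl (WB_of_path hℓ q1 hp hq1)
  | @cons a b cc h p ih =>
    intro x q1 hp hq1
    by_cases hcase : walkLen w q1 + w s(a, b) ≤ ℓ
    · have hp' : ((q1.concat h).append p).IsPath := by
        rw [SimpleGraph.Walk.concat_eq_append, ← SimpleGraph.Walk.append_assoc]
        simpa using hp
      have hq1' : walkLen w (q1.concat h) ≤ ℓ := by rw [walkLen_concat]; exact hcase
      rcases ih (q1.concat h) hp' hq1' with h1 | ⟨u, p', hpath, hlt, hwl, hwb⟩
      · exact Or.inl h1
      · refine Or.inr ⟨u, p', hpath, ?_, ?_, hwb⟩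
        · simp only [SimpleGraph.Walk.length_cons]; omega
        · rw [walkLen_concat] at hwl
          rw [walkLen_cons]
          linarith
    · push_neg at hcase
      refine Or.inr ⟨b, p, ?_, by simp, ?_, ?_⟩
      · exact ((hp.of_append_right).of_cons)
      · rw [walkLen_cons]; linarith
      · have w1 : WB (powerGraph G w ℓ) x a 1 := WB_of_path hℓ q1 hp.of_append_left hq1
        have w2 : WB (powerGraph G w ℓ) a b 1 := by
          refine WB_of_path hℓ (SimpleGraph.Walk.cons h SimpleGraph.Walk.nil) ?_ ?_
          · simp [SimpleGraph.Walk.isPath_def, h.ne]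
          · rw [walkLen_cons, walkLen_nil]
            simpa using hb s(a, b) ((SimpleGraph.mem_edgeSet G).2 h)
        exact w1.trans w2

lemma chop (hℓ : 0 < ℓ) (hpos : ∀ e ∈ G.edgeSet, 0 < w e) (hb : ∀ e ∈ G.edgeSet, w e ≤ ℓ) :
    ∀ (n : ℕ) {x y : V} (q : G.Walk x y), q.IsPath → q.length ≤ n →
      ∃ m : ℕ, WB (powerGraph G w ℓ) x y m ∧ (m : ℝ) * ℓ ≤ 2 * walkLen w q + ℓ := by
  intro n
  induction n using Nat.strong_induction_on with
  | _ n ihn =>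
    intro x y q hq hlen
    rcases peelAux hℓ hb q (SimpleGraph.Walk.nil)
        (by rw [SimpleGraph.Walk.nil_append]; exact hq) (by rw [walkLen_nil]; exact hℓ.le) with
      h1 | ⟨u, p', hp', hplen, hwl, hwb⟩
    · exact ⟨1, h1, by push_cast; nlinarith [walkLen_nonneg hpos q, hℓ.le]⟩
    · have hlt : p'.length < n := lt_of_lt_of_le hplen hlen
      obtain ⟨m, hm, hmle⟩ := ihn p'.length hlt p' hp' le_rfl
      refine ⟨2 + m, hwb.trans hm, ?_⟩
      rw [walkLen_nil] at hwl
      push_cast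
      nlinarith

end WalkLen

section Main

/-- Either equal, or both outside `R ∪ Z` and joined by a `c`-monochromatic path. -/
def AA {V : Type} (L : SimpleGraph V) {m : ℕ} (c : V → Fin m) (R Z : Set V) (x y : V) : Prop :=
  x = y ∨ (x ∈ (R ∪ Z)ᶜ ∧ y ∈ (R ∪ Z)ᶜ ∧ (colorGraph L (R ∪ Z)ᶜ c).Reachable x y)

def FrontP {V : Type} (L : SimpleGraph V) {m : ℕ} (c' c : V → Fin m) (R Z : Set V)
    (x z : V) : Prop :=
  x = z ∨ ∃ u, AA L c R Z x u ∧ (colorGraph L Rᶜ c').Adj u z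

def BackP {V : Type} (L : SimpleGraph V) {m : ℕ} (c' c : V → Fin m) (R Z : Set V)
    (z y : V) : Prop :=
  z = y ∨ ∃ v, (colorGraph L Rᶜ c').Adj z v ∧ AA L c R Z v y

def sigmaG {V : Type} (L : SimpleGraph V) (S : Set V) (E : ℕ) : SimpleGraph {v // v ∈ S} where
  Adj s s' := s ≠ s' ∧ WB L s.1 s'.1 E
  symm := ⟨by rintro s s' ⟨h1, h2⟩; exact ⟨h1.symm, h2.symm⟩⟩
  loopless := ⟨fun s h => h.1 rfl⟩

def LinkP {V : Type} (L : SimpleGraph V) (S : Set V) (E t : ℕ) (z z' : V) : Prop :=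
  ∃ s s' : {v // v ∈ S}, WB L z s.1 t ∧ WB L z' s'.1 t ∧ (sigmaG L S E).Reachable s s'

variable {V : Type} {L : SimpleGraph V} {m : ℕ} {c' c : V → Fin m} {R Z S : Set V} {t M : ℕ}

lemma mainInduction
    (hzS : ∀ z ∈ Z, ∃ s : {v // v ∈ S}, WB L z s.1 t)
    (hD : ∀ u v : V, u ∈ (R ∪ Z)ᶜ → v ∈ (R ∪ Z)ᶜ →
        (colorGraph L (R ∪ Z)ᶜ c).Reachable u v → WB L u v M)
    (hcc' : ∀ v ∈ (R ∪ Z)ᶜ, c' v = c v) :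
    ∀ {x y : V}, (colorGraph L Rᶜ c').Walk x y →
      AA L c R Z x y ∨
        ∃ z1 z2 : V, z1 ∈ Z ∧ z2 ∈ Z ∧ FrontP L c' c R Z x z1 ∧
          LinkP L S (2 * t + M + 3) t z1 z2 ∧ BackP L c' c R Z z2 y := by
  -- helper facts
  have hAA_WB : ∀ x y : V, AA L c R Z x y → WB L x y M := by
    rintro x y (rfl | ⟨hx, hy, hre⟩)
    · exact (WB.refl _ _).mono (Nat.zero_le _)
    · exact hD x y hx hy hre
  have hFront_WB : ∀ x z : V, FrontP L c' c R Z x z → WB L x z (M + 1) := by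
    rintro x z (rfl | ⟨u, hA, hadj⟩)
    · exact (WB.refl _ _).mono (Nat.zero_le _)
    · exact (hAA_WB x u hA).trans (WB.of_adj hadj.1)
  have bridge : ∀ z z1' z2' : V, z ∈ Z → WB L z z1' (M + 2) →
      LinkP L S (2 * t + M + 3) t z1' z2' → LinkP L S (2 * t + M + 3) t z z2' := by
    rintro z z1' z2' hz hWB ⟨s1, s2, h1, h2, hre⟩
    obtain ⟨s, hsWB⟩ := hzS z hz
    refine ⟨s, s2, hsWB, h2, SimpleGraph.Reachable.trans ?_ hre⟩
    by_cases hss : s = s1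
    · subst hss; exact SimpleGraph.Reachable.refl _
    · refine SimpleGraph.Adj.reachable ⟨hss, ?_⟩
      exact ((hsWB.symm.trans hWB).trans h1).mono (by omega)
  have memZc : ∀ v : V, v ∈ Rᶜ → v ∉ Z → v ∈ (R ∪ Z)ᶜ := by
    intro v hvR hvZ hmem
    rcases hmem with hv | hv
    · exact hvR hv
    · exact hvZ hv
  intro x y p
  induction p with
  | nil => exact Or.inl (Or.inl rfl)
  | @cons x u y h p ih =>
    have hxR : x ∈ Rᶜ := h.2.1
    have huR : u ∈ Rᶜ := h.2.2.1
    by_cases hxZ : x ∈ Z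
    · rcases ih with hA | ⟨z1', z2', hz1', hz2', hF, hL, hB⟩
      · obtain ⟨s, hs⟩ := hzS x hxZ
        exact Or.inr ⟨x, x, hxZ, hxZ, Or.inl rfl,
          ⟨s, s, hs, hs, SimpleGraph.Reachable.refl _⟩, Or.inr ⟨u, h, hA⟩⟩
      · have hWB : WB L x z1' (M + 2) := by
          have h1 : WB L x u 1 := WB.of_adj h.1
          exact (h1.trans (hFront_WB u z1' hF)).mono (by omega)
        exact Or.inr ⟨x, z2', hxZ, hz2', Or.inl rfl, bridge x z1' z2' hxZ hWB hL, hB⟩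
    · have hxZc : x ∈ (R ∪ Z)ᶜ := memZc x hxR hxZ
      by_cases huZ : u ∈ Z
      · rcases ih with hA | ⟨z1', z2', hz1', hz2', hF, hL, hB⟩
        · rcases hA with rfl | ⟨huZc, _, _⟩
          · obtain ⟨s, hs⟩ := hzS u huZ
            exact Or.inr ⟨u, u, huZ, huZ, Or.inr ⟨x, Or.inl rfl, h⟩,
              ⟨s, s, hs, hs, SimpleGraph.Reachable.refl _⟩, Or.inl rfl⟩
          · exact absurd (Set.mem_union_right R huZ) huZc
        · exact Or.inr ⟨u, z2', huZ, hz2', Or.inr ⟨x, Or.inl rfl, h⟩,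
            bridge u z1' z2' huZ ((hFront_WB u z1' hF).mono (by omega)) hL, hB⟩
      · have huZc : u ∈ (R ∪ Z)ᶜ := memZc u huR huZ
        have hD_adj : (colorGraph L (R ∪ Z)ᶜ c).Adj x u :=
          ⟨h.1, hxZc, huZc, by rw [← hcc' x hxZc, ← hcc' u huZc]; exact h.2.2.2⟩
        rcases ih with hA | ⟨z1', z2', hz1', hz2', hF, hL, hB⟩
        · left
          rcases hA with rfl | ⟨_, hyZc, hre⟩
          · exact Or.inr ⟨hxZc, huZc, hD_adj.reachable⟩
          · exact Or.inr ⟨hxZc, hyZc, hD_adj.reachable.trans hre⟩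
        · refine Or.inr ⟨z1', z2', hz1', hz2', ?_, hL, hB⟩
          rcases hF with rfl | ⟨u', hAu, hadj⟩
          · exact absurd hz1' huZ
          · rcases hAu with rfl | ⟨_, hu'Zc, hre⟩
            · exact Or.inr ⟨u, Or.inr ⟨hxZc, huZc, hD_adj.reachable⟩, hadj⟩
            · exact Or.inr ⟨u', Or.inr ⟨hxZc, hu'Zc, hD_adj.reachable.trans hre⟩, hadj⟩

end Main


/-- Theorem (Lemma `patching_centered_set`): colourings of `(G,φ)^ℓ − R` obtained by combining
a colouring of `(G,φ)^ℓ − (R ∪ Z)` of weak diameter in `(G,φ)^ℓ` at most `N` with an arbitrary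
colouring of `Z`, where `Z ⊆ N_{(G,φ)}^{≤r}[S]` with `|S| ≤ k`, have weak diameter in
`(G,φ)^ℓ` at most `N*`, where `N* ≥ N` depends only on `k`, `r`, `ℓ` and `N`. -/
theorem patching_centered_set (k : ℕ) (r : ℝ) (hr : 0 ≤ r) (ℓ N : ℝ)
    (hℓ : 0 < ℓ) (hN : 0 < N) :
    ∃ Nstar : ℝ, N ≤ Nstar ∧
      ∀ W : WGraph, W.IsBounded ℓ →
        ∀ S : Set W.V, S.ncard ≤ k →
          ∀ Z : Set W.V, Z ⊆ nbhd W.G W.w r S →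
            ∀ m : ℕ, 0 < m → ∀ R : Set W.V, ∀ c cZ : W.V → Fin m,
              HasWeakDiamLE (powerGraph W.G W.w ℓ) (R ∪ Z)ᶜ
                (powerGraph W.G W.w ℓ) c N →
              ∀ c' : W.V → Fin m,
                (∀ v ∈ Z \ R, c' v = cZ v) →
                (∀ v ∈ (R ∪ Z)ᶜ, c' v = c v) →
                HasWeakDiamLE (powerGraph W.G W.w ℓ) Rᶜ (powerGraph W.G W.w ℓ) c' Nstar := by
  classical
  set M := Nat.floor (N + 1) with hMdef
  set t := Nat.floor ((2 * r + ℓ) / ℓ) with htdef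
  set E := 2 * t + M + 3 with hEdef
  refine ⟨((2 * M + 2 * t + k * E + 2 : ℕ) : ℝ), ?_, ?_⟩
  · have h1 : N < (M : ℝ) := by
      have h0 := Nat.lt_floor_add_one (N + 1)
      rw [← hMdef] at h0
      linarith
    have h2 : (M : ℝ) ≤ ((2 * M + 2 * t + k * E + 2 : ℕ) : ℝ) := by
      exact_mod_cast Nat.le_add_right M (M + 2 * t + k * E + 2) |>.trans (le_of_eq (by ring))
    linarith
  · intro W hbW S hS Z hZ m hm R c cZ hc c' hc'Z hc'c
    have finV := W.fin
    set L := powerGraph W.G W.w ℓ with hLdef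
    have hzS : ∀ z ∈ Z, ∃ s : {v // v ∈ S}, WB L z s.1 t := by
      intro z hz
      obtain ⟨s, hs, q, hq, hqr⟩ := hZ hz
      obtain ⟨m', hm', hmle⟩ := chop hℓ W.pos hbW q.length q hq le_rfl
      refine ⟨⟨s, hs⟩, hm'.mono (Nat.le_floor ?_)⟩
      rw [le_div_iff₀ hℓ]
      linarith
    have hD : ∀ u v : W.V, u ∈ (R ∪ Z)ᶜ → v ∈ (R ∪ Z)ᶜ →
        (colorGraph L (R ∪ Z)ᶜ c).Reachable u v → WB L u v M := by
      intro u v hu hv hre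
      exact WB_of_hopDist hN.le (hc u hu v hv hre)
    have hAA_WB : ∀ x y : W.V, AA L c R Z x y → WB L x y M := by
      rintro x y (rfl | ⟨hx, hy, hre⟩)
      · exact (WB.refl _ _).mono (Nat.zero_le _)
      · exact hD x y hx hy hre
    letI : Fintype W.V := Fintype.ofFinite _
    letI : Fintype {v // v ∈ S} := Fintype.ofFinite _
    have hcard : Fintype.card {v // v ∈ S} ≤ k := by
      rw [← Set.toFinset_card, ← Set.ncard_eq_toFinset_card']
      exact hS
    have sigmaWalkWB : ∀ (s s' : {v // v ∈ S}) (p : (sigmaG L S E).Walk s s'),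
        WB L s.1 s'.1 (p.length * E) := by
      intro s s' p
      induction p with
      | nil => exact (WB.refl _ _).mono (Nat.zero_le _)
      | cons h p ih =>
        refine (h.2.trans ih).mono (le_of_eq ?_)
        rw [SimpleGraph.Walk.length_cons, Nat.succ_mul, Nat.add_comm]
    have sigmaReach : ∀ s s' : {v // v ∈ S}, (sigmaG L S E).Reachable s s' →
        WB L s.1 s'.1 (k * E) := by
      intro s s' hre
      obtain ⟨p⟩ := hre
      have hlt := SimpleGraph.Walk.IsPath.length_lt p.toPath.2
      have hlen : (p.toPath.1).length ≤ k := by omega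
      exact (sigmaWalkWB _ _ p.toPath.1).mono (Nat.mul_le_mul_right _ hlen)
    intro x hx y hy hre
    obtain ⟨p⟩ := hre
    rcases mainInduction hzS hD hc'c p with hA | ⟨z1, z2, hz1, hz2, hF, hL', hB⟩
    · refine le_trans (hopDist_le_WB (hAA_WB x y hA)) ?_
      rw [← ENNReal.ofReal_natCast]
      exact ENNReal.ofReal_le_ofReal (by exact_mod_cast Nat.le_add_right M (M + 2 * t + k * E + 2) |>.trans (le_of_eq (by ring)))
    · obtain ⟨s1, s2, hws1, hws2, hsre⟩ := hL'
      have w1 : WB L x z1 (M + 1) := by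
        rcases hF with rfl | ⟨u, hA, hadj⟩
        · exact (WB.refl _ _).mono (Nat.zero_le _)
        · exact (hAA_WB x u hA).trans (WB.of_adj hadj.1)
      have w5 : WB L z2 y (M + 1) := by
        rcases hB with rfl | ⟨v, hadj, hA⟩
        · exact (WB.refl _ _).mono (Nat.zero_le _)
        · exact ((WB.of_adj hadj.1).trans (hAA_WB v y hA)).mono (by omega)
      have wtot : WB L x y ((M + 1) + t + k * E + t + (M + 1)) :=
        (((w1.trans hws1).trans (sigmaReach s1 s2 hsre)).trans hws2.symm).trans w5
      refine le_trans (hopDist_le_WB wtot) ?_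
      rw [← ENNReal.ofReal_natCast]
      exact ENNReal.ofReal_le_ofReal (by exact_mod_cast le_of_eq (by ring))
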